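/- Let ε>0, c∈ℝ, and let a,b:[0,ε]→ℝ be continuous with a(0)>0. Suppose x:[0,ε]→ℝ is continuous, continuously differentiable on (0,ε], satisfies x'(t) = -a(t)·(x(t)-c)/t + b(t) for all t∈(0,ε], and x(0)=c. Then x is continuously differentiable on all of [0,ε], with x'(0) = b(0)/(1+a(0)). -/

import Mathlib

open Set

open Filter Topology

lemma barrier {T : ℝ} (w w' : ℝ → ℝ)
    (hc : ContinuousOn w (Icc 0 T)) (h0 : w 0 = 0)
    (hd : ∀ s ∈ Ioc (0:ℝ) T, HasDerivAt w (w' s) s)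
    (hneg : ∀ s ∈ Ioc (0:ℝ) T, 0 < w s → w' s < 0) :
    ∀ t ∈ Icc (0:ℝ) T, w t ≤ 0 := by
  intro t ht
  by_contra hpos
  push_neg at hpos
  have ht0 : 0 < t := by
    rcases eq_or_lt_of_le ht.1 with h | h
    · rw [← h, h0] at hpos; exact absurd hpos (lt_irrefl 0)
    · exact h
  have hsub : Icc (0:ℝ) t ⊆ Icc 0 T := Icc_subset_Icc le_rfl ht.2
  set S := Icc (0:ℝ) t ∩ w ⁻¹' (Iic 0) with hSdef
  have h0S : (0:ℝ) ∈ S := ⟨⟨le_rfl, ht0.le⟩, by simp [h0]⟩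
  have hSbdd : BddAbove S := ⟨t, fun s hs => hs.1.2⟩
  have hSclosed : IsClosed S :=
    (hc.mono hsub).preimage_isClosed_of_isClosed isClosed_Icc isClosed_Iic
  set m := sSup S with hm
  have hmS : m ∈ S := hSclosed.csSup_mem ⟨0, h0S⟩ hSbdd
  have hmt : m < t := by
    rcases eq_or_lt_of_le hmS.1.2 with h | h
    · exfalso; have := hmS.2; rw [h] at this; exact absurd hpos (not_lt.2 this)
    · exact h
  have hm0 : 0 ≤ m := hmS.1.1
  have hwp : ∀ s ∈ Ioc m t, 0 < w s := by
    intro s hs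
    by_contra hws
    push_neg at hws
    have : s ∈ S := ⟨⟨hm0.trans hs.1.le, hs.2⟩, hws⟩
    exact absurd (le_csSup hSbdd this) (not_le.2 hs.1)
  have hanti : StrictAntiOn w (Icc m t) := by
    apply strictAntiOn_of_deriv_neg (convex_Icc m t)
      (hc.mono (Icc_subset_Icc hm0 ht.2))
    intro s hs
    rw [interior_Icc] at hs
    have hsIoc : s ∈ Ioc (0:ℝ) T := ⟨lt_of_le_of_lt hm0 hs.1, hs.2.le.trans ht.2⟩
    rw [(hd s hsIoc).deriv]
    exact hneg s hsIoc (hwp s ⟨hs.1, hs.2.le⟩)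
  have h1 : w t < w m := hanti (left_mem_Icc.2 hmt.le) (right_mem_Icc.2 hmt.le) hmt
  have h2 := hmS.2
  simp only [mem_preimage, mem_Iic] at h2
  linarith

/-- Singular ODE regularity at t = 0: if x'(t) = -a(t)(x(t)-c)/t + b(t) on (0,ε],
x continuous on [0,ε] with x(0) = c, a(0) > 0, then x is C¹ on [0,ε] with
x'(0) = b(0)/(1+a(0)). -/
theorem stmt0 (ε c : ℝ) (hε : 0 < ε) (a b x x' : ℝ → ℝ)
    (ha : ContinuousOn a (Icc 0 ε)) (hb : ContinuousOn b (Icc 0 ε))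
    (ha0 : 0 < a 0)
    (hx : ContinuousOn x (Icc 0 ε))
    (hderiv : ∀ t ∈ Ioc (0:ℝ) ε, HasDerivAt x (x' t) t)
    (hx'cont : ContinuousOn x' (Ioc 0 ε))
    (hode : ∀ t ∈ Ioc (0:ℝ) ε, x' t = -a t * (x t - c) / t + b t)
    (hx0 : x 0 = c) :
    ∃ X' : ℝ → ℝ, ContinuousOn X' (Icc 0 ε) ∧
      (∀ t ∈ Icc (0:ℝ) ε, HasDerivWithinAt x (X' t) (Icc 0 ε) t) ∧
      (∀ t ∈ Ioc (0:ℝ) ε, X' t = x' t) ∧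
      X' 0 = b 0 / (1 + a 0) := by
  have h1a : (0:ℝ) < 1 + a 0 := by linarith
  set L := b 0 / (1 + a 0) with hL
  have hLb : b 0 - a 0 * L = L := by
    rw [hL, mul_div_assoc', eq_div_iff h1a.ne', sub_mul, div_mul_cancel₀ _ h1a.ne']
    ring
  -- the squeeze: (L-δ)t ≤ x t - c ≤ (L+δ)t near 0
  have key : ∀ δ : ℝ, 0 < δ → ∃ r, 0 < r ∧ r ≤ ε ∧
      ∀ t ∈ Ioc (0:ℝ) r, (L - δ) * t ≤ x t - c ∧ x t - c ≤ (L + δ) * t := by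
    intro δ hδ
    set η : ℝ := min (a 0 * δ / (|L| + δ + 1)) (a 0) with hη
    have hLδ : (0:ℝ) < |L| + δ + 1 := by positivity
    have hηpos : 0 < η := lt_min (by positivity) ha0
    have hηa : η ≤ a 0 := min_le_right _ _
    have hηδ : η * (|L| + δ + 1) ≤ a 0 * δ := by
      have := min_le_left (a 0 * δ / (|L| + δ + 1)) (a 0)
      rw [le_div_iff₀ hLδ] at this
      exact this
    obtain ⟨r1, hr1, har⟩ := Metric.continuousWithinAt_iff.1 (ha 0 ⟨le_rfl, hε.le⟩) η hηpos
    obtain ⟨r2, hr2, hbr⟩ := Metric.continuousWithinAt_iff.1 (hb 0 ⟨le_rfl, hε.le⟩) η hηpos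
    set r := min ε (min (r1/2) (r2/2)) with hrdef
    have hrpos : 0 < r := lt_min hε (lt_min (by linarith) (by linarith))
    have hrε : r ≤ ε := min_le_left _ _
    refine ⟨r, hrpos, hrε, ?_⟩
    have hfacts : ∀ s ∈ Ioc (0:ℝ) r, |a s - a 0| < η ∧ |b s - b 0| < η ∧ 0 < a s := by
      intro s hs
      have hsIcc : s ∈ Icc (0:ℝ) ε := ⟨hs.1.le, hs.2.trans hrε⟩
      have hds : dist s 0 = s := by rw [Real.dist_eq, sub_zero, abs_of_pos hs.1]
      have hd1 : dist s 0 < r1 := by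
        rw [hds]
        calc s ≤ r := hs.2
        _ ≤ r1 / 2 := (min_le_right _ _).trans (min_le_left _ _)
        _ < r1 := by linarith
      have hd2 : dist s 0 < r2 := by
        rw [hds]
        calc s ≤ r := hs.2
        _ ≤ r2 / 2 := (min_le_right _ _).trans (min_le_right _ _)
        _ < r2 := by linarith
      have hA : |a s - a 0| < η := by rw [← Real.dist_eq]; exact har hsIcc hd1
      have hB : |b s - b 0| < η := by rw [← Real.dist_eq]; exact hbr hsIcc hd2
      refine ⟨hA, hB, ?_⟩
      have := abs_lt.1 hA
      linarith
    have hup : ∀ t ∈ Icc (0:ℝ) r, x t - (c + (L + δ) * t) ≤ 0 := by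
      apply barrier (fun t => x t - (c + (L + δ) * t)) (fun s => x' s - (L + δ))
      · exact (hx.mono (Icc_subset_Icc le_rfl hrε)).sub
          (Continuous.continuousOn (continuous_const.add (continuous_const.mul continuous_id)))
      · simp [hx0]
      · intro s hs
        have hsε : s ∈ Ioc (0:ℝ) ε := ⟨hs.1, hs.2.trans hrε⟩
        have hline : HasDerivAt (fun t : ℝ => c + (L + δ) * t) (L + δ) s := by
          simpa using ((hasDerivAt_id s).const_mul (L + δ)).const_add c
        exact (hderiv s hsε).sub hline
      · intro s hs hws
        have hsε : s ∈ Ioc (0:ℝ) ε := ⟨hs.1, hs.2.trans hrε⟩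
        obtain ⟨hA, hB, hAs⟩ := hfacts s hs
        rw [hode s hsε]
        have hu : L + δ < (x s - c) / s := by
          rw [lt_div_iff₀ hs.1]; linarith
        have hrw : -a s * (x s - c) / s = -(a s * ((x s - c) / s)) := by ring
        rw [hrw]
        have hmul : a s * (L + δ) < a s * ((x s - c) / s) :=
          mul_lt_mul_of_pos_left hu hAs
        have hprod : (a 0 - a s) * (L + δ) ≤ η * (|L| + δ) := by
          calc (a 0 - a s) * (L + δ) ≤ |(a 0 - a s) * (L + δ)| := le_abs_self _
          _ = |a 0 - a s| * |L + δ| := abs_mul _ _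
          _ ≤ η * (|L| + δ) := by
              apply mul_le_mul _ _ (abs_nonneg _) hηpos.le
              · rw [abs_sub_comm]; exact hA.le
              · calc |L + δ| ≤ |L| + |δ| := abs_add_le _ _
                _ = |L| + δ := by rw [abs_of_pos hδ]
        have hbb := abs_lt.1 hB
        linarith [hmul, hprod, hηδ, hLb, hbb.2]
    have hlo : ∀ t ∈ Icc (0:ℝ) r, (c + (L - δ) * t) - x t ≤ 0 := by
      apply barrier (fun t => (c + (L - δ) * t) - x t) (fun s => (L - δ) - x' s)
      · exact (Continuous.continuousOn (continuous_const.add (continuous_const.mul continuous_id))).sub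
          (hx.mono (Icc_subset_Icc le_rfl hrε))
      · simp [hx0]
      · intro s hs
        have hsε : s ∈ Ioc (0:ℝ) ε := ⟨hs.1, hs.2.trans hrε⟩
        have hline : HasDerivAt (fun t : ℝ => c + (L - δ) * t) (L - δ) s := by
          simpa using ((hasDerivAt_id s).const_mul (L - δ)).const_add c
        exact hline.sub (hderiv s hsε)
      · intro s hs hws
        have hsε : s ∈ Ioc (0:ℝ) ε := ⟨hs.1, hs.2.trans hrε⟩
        obtain ⟨hA, hB, hAs⟩ := hfacts s hs
        rw [hode s hsε]
        have hu : (x s - c) / s < L - δ := by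
          rw [div_lt_iff₀ hs.1]; linarith
        have hrw : -a s * (x s - c) / s = -(a s * ((x s - c) / s)) := by ring
        rw [hrw]
        have hmul : a s * ((x s - c) / s) < a s * (L - δ) :=
          mul_lt_mul_of_pos_left hu hAs
        have hprod : (a s - a 0) * (L - δ) ≤ η * (|L| + δ) := by
          calc (a s - a 0) * (L - δ) ≤ |(a s - a 0) * (L - δ)| := le_abs_self _
          _ = |a s - a 0| * |L - δ| := abs_mul _ _
          _ ≤ η * (|L| + δ) := by
              apply mul_le_mul hA.le _ (abs_nonneg _) hηpos.le
              calc |L - δ| = |L + -δ| := by rw [sub_eq_add_neg]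
              _ ≤ |L| + |-δ| := abs_add_le _ _
              _ = |L| + δ := by rw [abs_neg, abs_of_pos hδ]
        have hbb := abs_lt.1 hB
        linarith [hmul, hprod, hηδ, hLb, hbb.1]
    intro t ht
    have htIcc : t ∈ Icc (0:ℝ) r := ⟨ht.1.le, ht.2⟩
    constructor
    · linarith [hlo t htIcc]
    · linarith [hup t htIcc]
  -- slope tendsto
  have hslope : Tendsto (fun t => (x t - c) / t) (𝓝[Ioc 0 ε] 0) (𝓝 L) := by
    rw [Metric.tendsto_nhdsWithin_nhds]
    intro δ hδ
    obtain ⟨r, hr, hrε, hbnd⟩ := key (δ / 2) (by linarith)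
    refine ⟨r, hr, fun t ht hdist => ?_⟩
    have htr : t ∈ Ioc (0:ℝ) r := by
      refine ⟨ht.1, ?_⟩
      rw [Real.dist_eq, sub_zero, abs_of_pos ht.1] at hdist
      exact hdist.le
    obtain ⟨hl, hu⟩ := hbnd t htr
    rw [Real.dist_eq]
    have ht0 : (0:ℝ) < t := ht.1
    have h1 : (x t - c) / t ≤ L + δ / 2 := by
      rw [div_le_iff₀ ht0]; linarith
    have h2 : L - δ / 2 ≤ (x t - c) / t := by
      rw [le_div_iff₀ ht0]; linarith
    rw [abs_lt]
    constructor <;> linarith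
  -- x' tendsto
  have hx'tend : Tendsto x' (𝓝[Ioc 0 ε] 0) (𝓝 L) := by
    have haT : Tendsto a (𝓝[Ioc 0 ε] 0) (𝓝 (a 0)) :=
      tendsto_nhdsWithin_mono_left Ioc_subset_Icc_self (ha 0 ⟨le_rfl, hε.le⟩)
    have hbT : Tendsto b (𝓝[Ioc 0 ε] 0) (𝓝 (b 0)) :=
      tendsto_nhdsWithin_mono_left Ioc_subset_Icc_self (hb 0 ⟨le_rfl, hε.le⟩)
    have hcomb : Tendsto (fun t => -a t * ((x t - c) / t) + b t) (𝓝[Ioc 0 ε] 0)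
        (𝓝 (-a 0 * L + b 0)) := ((haT.neg.mul hslope).add hbT)
    have heq : -a 0 * L + b 0 = L := by linarith [hLb]
    rw [heq] at hcomb
    apply hcomb.congr'
    filter_upwards [eventually_mem_nhdsWithin] with t ht
    rw [hode t ht]; ring
  -- define X'
  refine ⟨fun t => if t = 0 then L else x' t, ?_, ?_, ?_, ?_⟩
  · -- continuity
    intro t ht
    rcases eq_or_lt_of_le ht.1 with h0t | h0t
    · rw [← h0t]
      have hins : Icc (0:ℝ) ε = insert 0 (Ioc 0 ε) := (Ioc_insert_left hε.le).symm
      rw [ContinuousWithinAt, hins]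
      have : Tendsto (fun t => if t = 0 then L else x' t) (𝓝[Ioc 0 ε] 0) (𝓝 L) := by
        apply hx'tend.congr'
        filter_upwards [eventually_mem_nhdsWithin] with s hs
        rw [if_neg (ne_of_gt hs.1)]
      have h00 : (if (0:ℝ) = 0 then L else x' 0) = L := if_pos rfl
      rw [h00, nhdsWithin_insert]
      exact Tendsto.sup (by simpa using tendsto_pure_nhds (fun t => if t = 0 then L else x' t) 0) this
    · have hmem : Ioc (0:ℝ) ε ∈ 𝓝[Icc 0 ε] t := by
        apply mem_nhdsWithin.2
        exact ⟨Ioi 0, isOpen_Ioi, h0t, fun s hs => ⟨hs.1, hs.2.2⟩⟩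
      have hcw : ContinuousWithinAt x' (Icc 0 ε) t :=
        (hx'cont t ⟨h0t, ht.2⟩).mono_of_mem_nhdsWithin hmem
      apply hcw.congr_of_eventuallyEq
      · filter_upwards [hmem] with s hs
        rw [if_neg (ne_of_gt hs.1)]
      · rw [if_neg (ne_of_gt h0t)]
  · -- derivatives
    intro t ht
    rcases eq_or_lt_of_le ht.1 with h0t | h0t
    · rw [← h0t]
      simp only [if_pos rfl]
      rw [hasDerivWithinAt_iff_tendsto_slope]
      have hdiff : Icc (0:ℝ) ε \ {0} = Ioc 0 ε := Icc_diff_left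
      rw [hdiff]
      apply hslope.congr
      intro s
      simp [slope_def_field, hx0, div_eq_div_iff]
    · simp only [if_neg (ne_of_gt h0t)]
      exact (hderiv t ⟨h0t, ht.2⟩).hasDerivWithinAt
  · intro t ht
    exact if_neg (ne_of_gt ht.1)
  · simp [hL]
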